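/- Let X be a finite poset with a least element and a greatest element, and let n = |X| + 1. Then there exists a surjective weak p-morphism from P(2^n) onto X. -/
import Mathlib


/-- The set of maximal elements of the subposet `S`. -/
def maxSet {X : Type*} [PartialOrder X] (S : Set X) : Set X :=
  {x | x ∈ S ∧ ∀ y ∈ S, x ≤ y → y = x}

/-- A weak p-morphism: an order preserving map such that for all `x` and all maximal `y`
above `p x` there is a maximal element `z` of `↑x` with `p z = y`. -/
def IsWeakPMorphism {X Y : Type*} [PartialOrder X] [PartialOrder Y] (p : X → Y) : Prop :=
  Monotone p ∧
    ∀ x : X, ∀ y ∈ maxSet (Set.univ : Set Y), p x ≤ y →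
      ∃ z ∈ maxSet (Set.Ici x), p z = y

/-- The poset `P(X)`: pairs `⟨x, C⟩` with `C` a nonempty subset of `↑x`, ordered by
`⟨x, C⟩ ≤ ⟨y, D⟩ iff x ≤ y and D ⊆ C`. -/
structure PP (X : Type*) [PartialOrder X] where
  pt : X
  cl : Set X
  cl_nonempty : cl.Nonempty
  cl_subset : cl ⊆ Set.Ici pt

instance PP.instPartialOrder {X : Type*} [PartialOrder X] : PartialOrder (PP X) where
  le a b := a.pt ≤ b.pt ∧ b.cl ⊆ a.cl
  le_refl a := ⟨le_rfl, subset_rfl⟩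
  le_trans a b c hab hbc := ⟨hab.1.trans hbc.1, hbc.2.trans hab.2⟩
  le_antisymm a b hab hba := by
    obtain ⟨pa, ca, h1, h2⟩ := a
    obtain ⟨pb, cb, h3, h4⟩ := b
    obtain ⟨hle, hsub⟩ := hab
    obtain ⟨hge, hsup⟩ := hba
    have e1 : pa = pb := le_antisymm hle hge
    have e2 : ca = cb := Set.Subset.antisymm hsup hsub
    subst e1; subst e2; rfl

lemma PP.ext' {X : Type*} [PartialOrder X] {a b : PP X}
    (h1 : a.pt = b.pt) (h2 : a.cl = b.cl) : a = b := by
  cases a; cases b; simp_all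

lemma PP.le_def {X : Type*} [PartialOrder X] {a b : PP X} :
    a ≤ b ↔ a.pt ≤ b.pt ∧ b.cl ⊆ a.cl := Iff.rfl

open Classical in
/-- Auxiliary monotone map `Set (Fin n) → X`. -/
noncomputable def myF {X : Type*} [PartialOrder X] {n : ℕ} (b t : X) (y : Fin n → X)
    (s : Set (Fin n)) : X :=
  if hs : s.Nonempty then
    (if ∀ i ∈ s, ∀ j ∈ s, i ≤ j → y i ≤ y j then
      y ((Set.toFinite s).toFinset.max'
        ⟨hs.choose, (Set.toFinite s).mem_toFinset.2 hs.choose_spec⟩)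
    else t)
  else b

lemma myF_mono {X : Type*} [PartialOrder X] {n : ℕ} {b t : X} (hb : IsBot b) (ht : IsTop t)
    (y : Fin n → X) : Monotone (myF b t y) := by
  classical
  intro s s' hss
  unfold myF
  by_cases hs : s.Nonempty
  · have hs' : s'.Nonempty := hs.mono hss
    rw [dif_pos hs, dif_pos hs']
    by_cases hc' : ∀ i ∈ s', ∀ j ∈ s', i ≤ j → y i ≤ y j
    · have hc : ∀ i ∈ s, ∀ j ∈ s, i ≤ j → y i ≤ y j := fun i hi j hj hij =>
        hc' i (hss hi) j (hss hj) hij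
      rw [if_pos hc', if_pos hc]
      set M := (Set.toFinite s).toFinset.max'
        ⟨hs.choose, (Set.toFinite s).mem_toFinset.2 hs.choose_spec⟩ with hM
      set M' := (Set.toFinite s').toFinset.max'
        ⟨hs'.choose, (Set.toFinite s').mem_toFinset.2 hs'.choose_spec⟩ with hM'
      have hMs : M ∈ s := (Set.toFinite s).mem_toFinset.1 (Finset.max'_mem _ _)
      have hM's : M' ∈ s' := (Set.toFinite s').mem_toFinset.1 (Finset.max'_mem _ _)
      have hle : M ≤ M' := Finset.le_max' _ _ ((Set.toFinite s').mem_toFinset.2 (hss hMs))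
      exact hc' M (hss hMs) M' hM's hle
    · rw [if_neg hc']
      exact ht _
  · rw [dif_neg hs]
    exact hb _

lemma myF_singleton {X : Type*} [PartialOrder X] {n : ℕ} (b t : X) (y : Fin n → X)
    (k : Fin n) : myF b t y {k} = y k := by
  classical
  unfold myF
  have hs : ({k} : Set (Fin n)).Nonempty := ⟨k, rfl⟩
  rw [dif_pos hs, if_pos]
  · congr 1
    have := (Set.toFinite ({k} : Set (Fin n))).mem_toFinset.1
      (Finset.max'_mem (Set.toFinite ({k} : Set (Fin n))).toFinset
        ⟨hs.choose, (Set.toFinite _).mem_toFinset.2 hs.choose_spec⟩)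
    simpa using this
  · intro i hi j hj _
    simp only [Set.mem_singleton_iff] at hi hj
    subst hi; subst hj
    exact le_rfl

/-- If `X` is a finite poset with a least and a greatest element and `n = |X| + 1`, then
there is a surjective weak p-morphism from `P(2^n)` onto `X`. -/
theorem pp_surjection_onto_bounded_poset
    {X : Type*} [PartialOrder X] [Fintype X]
    (b t : X) (hb : IsBot b) (ht : IsTop t) :
    ∃ p : PP (Set (Fin (Fintype.card X + 1))) → X,
      Function.Surjective p ∧ IsWeakPMorphism p := by
  classical
  set n := Fintype.card X + 1 with hn
  have hcard : 1 ≤ Fintype.card X := Fintype.card_pos_iff.2 ⟨b⟩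
  -- enumeration of X
  let e : X ≃ Fin (Fintype.card X) := Fintype.equivFin X
  let y : Fin n → X := fun j => if h : (j : ℕ) < Fintype.card X then e.symm ⟨j, h⟩ else b
  have hy_surj : ∀ v : X, ∃ k : Fin n, y k = v := by
    intro v
    refine ⟨⟨(e v : ℕ), by have := (e v).isLt; omega⟩, ?_⟩
    have h : ((e v : ℕ)) < Fintype.card X := (e v).isLt
    simp only [y, dif_pos h]
    have : (⟨(e v : ℕ), h⟩ : Fin (Fintype.card X)) = e v := by
      apply Fin.ext; rfl
    rw [this, Equiv.symm_apply_apply]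
  let f : Set (Fin n) → X := myF b t y
  let p : PP (Set (Fin n)) → X := fun a => if a.cl = {a.pt} then t else f a.pt
  -- singleton sets are not univ
  have hsing_ne_univ : ∀ k : Fin n, ({k} : Set (Fin n)) ≠ Set.univ := by
    intro k h
    have h0 : ∀ i : Fin n, i ∈ ({k} : Set (Fin n)) := fun i => h ▸ Set.mem_univ i
    have e01 : (⟨0, by omega⟩ : Fin n) = (⟨1, by omega⟩ : Fin n) :=
      (Set.mem_singleton_iff.1 (h0 _)).trans (Set.mem_singleton_iff.1 (h0 _)).symm
    exact Nat.zero_ne_one (congrArg Fin.val e01)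
  -- key: if a ≤ a' and a.cl = {a.pt} then a = a'
  have hsing_max : ∀ a a' : PP (Set (Fin n)), a ≤ a' → a.cl = {a.pt} → a' = a := by
    intro a a' haa' hc
    obtain ⟨hpt, hcl⟩ := haa'
    rw [hc] at hcl
    have hcl' : a'.cl = {a.pt} := by
      obtain ⟨u, hu⟩ := a'.cl_nonempty
      have huk : u = a.pt := hcl hu
      refine Set.Subset.antisymm hcl ?_
      rintro u' hu'
      rw [Set.mem_singleton_iff] at hu'
      subst hu'
      exact huk ▸ hu
    have : a.pt ∈ Set.Ici a'.pt := a'.cl_subset (hcl' ▸ rfl)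
    have hpt' : a'.pt = a.pt := le_antisymm this hpt
    exact PP.ext' hpt' (by rw [hcl', hc])
  refine ⟨p, ?_, ?_, ?_⟩
  · -- surjective
    intro v
    obtain ⟨k, hk⟩ := hy_surj v
    refine ⟨⟨{k}, {({k} : Set (Fin n)), Set.univ}, ⟨{k}, Or.inl rfl⟩, ?_⟩, ?_⟩
    · rintro u (rfl | rfl)
      · exact Set.self_mem_Ici
      · exact Set.subset_univ _
    · show p _ = v
      have hne : ({({k} : Set (Fin n)), Set.univ} : Set (Set (Fin n))) ≠ {({k} : Set (Fin n))} := by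
        intro h
        have : (Set.univ : Set (Fin n)) ∈ ({({k} : Set (Fin n))} : Set (Set (Fin n))) :=
          h ▸ (Or.inr rfl)
        exact hsing_ne_univ k (Set.mem_singleton_iff.1 this).symm
      simp only [p, if_neg hne]
      show f {k} = v
      rw [show f {k} = y k from myF_singleton b t y k, hk]
  · -- monotone
    intro a a' haa'
    by_cases hc' : a'.cl = {a'.pt}
    · simp only [p, if_pos hc']
      exact ht _
    · have hc : a.cl ≠ {a.pt} := by
        intro hc
        exact hc' (by rw [hsing_max a a' haa' hc]; exact hc)
      simp only [p, if_neg hc, if_neg hc']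
      exact myF_mono hb ht y haa'.1
  · -- p-morphism condition
    intro a ymax hymax hple
    have hyt : ymax = t := (hymax.2 t (Set.mem_univ t) (ht ymax)).symm
    obtain ⟨c, hc⟩ := a.cl_nonempty
    have hz1 : ({c} : Set (Set (Fin n))) ⊆ Set.Ici c := by
      rintro u rfl; exact Set.self_mem_Ici
    have hz2 : ({c} : Set (Set (Fin n))) ⊆ a.cl := by
      rintro u rfl; exact hc
    refine ⟨⟨c, {c}, ⟨c, rfl⟩, hz1⟩, ⟨⟨a.cl_subset hc, hz2⟩, ?_⟩, ?_⟩
    · -- maximality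
      intro w _ hzw
      exact hsing_max _ w hzw rfl
    · show p _ = ymax
      simp only [p, if_pos rfl, hyt]
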